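/- If θ follows a von Mises distribution with parameters (ν, τ) where the density is exp(τ·cos(θ-ν))/(2π·I₀(τ)), then as τ → ∞ the random variable √τ·(θ - ν) converges in distribution to a standard normal random variable. -/

import Mathlib

open MeasureTheory ProbabilityTheory Real Filter
open scoped Topology

/-- Modified Bessel function of the first kind of order 0. -/
noncomputable def besselI0 (τ : ℝ) : ℝ := (1 / π) * ∫ t in (0 : ℝ)..π, Real.exp (τ * Real.cos t)

/-- The law of a von Mises random variable with mean direction `ν` and concentration `τ`,
supported on `[ν - π, ν + π]`. -/
noncomputable def vonMisesLaw (ν τ : ℝ) : Measure ℝ :=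
  volume.withDensity (fun θ =>
    ENNReal.ofReal (Set.indicator (Set.Icc (ν - π) (ν + π))
      (fun θ => Real.exp (τ * Real.cos (θ - ν)) / (2 * π * besselI0 τ)) θ))

lemma sqrt_tendsto_atTop : Tendsto Real.sqrt atTop atTop := by
  apply tendsto_atTop_atTop.mpr
  intro b
  refine ⟨max 0 (b^2), fun a ha => ?_⟩
  have h0 : (0:ℝ) ≤ a := le_trans (le_max_left _ _) ha
  have hb : b^2 ≤ a := le_trans (le_max_right _ _) ha
  calc b ≤ |b| := le_abs_self b
  _ = Real.sqrt (b^2) := (Real.sqrt_sq_eq_abs b).symm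
  _ ≤ Real.sqrt a := Real.sqrt_le_sqrt hb

lemma tendsto_tau_cos (u : ℝ) :
    Tendsto (fun τ : ℝ => τ * (Real.cos (u / Real.sqrt τ) - 1)) atTop (𝓝 (-u^2/2)) := by
  rcases eq_or_ne u 0 with rfl | hu
  · simpa using tendsto_const_nhds (α := ℝ) (x := (0:ℝ))
  · -- sin h / h → 1 as h → 0, h ≠ 0
    have hslope : Tendsto (fun h : ℝ => Real.sin h / h) (nhdsWithin 0 {0}ᶜ) (𝓝 1) := by
      have := hasDerivAt_iff_tendsto_slope.mp (Real.hasDerivAt_sin 0)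
      rw [Real.cos_zero] at this
      refine this.congr (fun h => ?_)
      simp [slope_def_field, div_eq_div_iff]
    have hh : Tendsto (fun τ : ℝ => u / (2 * Real.sqrt τ)) atTop (nhdsWithin 0 {0}ᶜ) := by
      rw [tendsto_nhdsWithin_iff]
      constructor
      · apply Tendsto.div_atTop tendsto_const_nhds
        exact sqrt_tendsto_atTop.const_mul_atTop two_pos
      · filter_upwards [eventually_gt_atTop (0:ℝ)] with τ hτ
        have : Real.sqrt τ > 0 := Real.sqrt_pos.mpr hτ
        simp only [Set.mem_compl_iff, Set.mem_singleton_iff]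
        positivity
    have h1 : Tendsto (fun τ : ℝ => Real.sqrt τ * Real.sin (u / (2 * Real.sqrt τ))) atTop
        (𝓝 (u / 2)) := by
      have := (hslope.comp hh).const_mul (u / 2)
      rw [mul_one] at this
      refine this.congr' ?_
      filter_upwards [eventually_gt_atTop (0:ℝ)] with τ hτ
      have hs : Real.sqrt τ > 0 := Real.sqrt_pos.mpr hτ
      simp only [Function.comp_apply]
      field_simp
    have h2 : Tendsto (fun τ : ℝ =>
        -2 * (Real.sqrt τ * Real.sin (u / (2 * Real.sqrt τ)))^2) atTop (𝓝 (-u^2/2)) := by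
      have := ((h1.pow 2).const_mul (-2 : ℝ))
      convert this using 2
      ring
    refine h2.congr' ?_
    filter_upwards [eventually_gt_atTop (0:ℝ)] with τ hτ
    have hs : Real.sqrt τ > 0 := Real.sqrt_pos.mpr hτ
    have hsq : Real.sqrt τ ^ 2 = τ := Real.sq_sqrt hτ.le
    have hcos : Real.cos (u / Real.sqrt τ) = 1 - 2 * Real.sin (u / Real.sqrt τ / 2)^2 := by
      have h := Real.sin_sq_eq_half_sub (u / Real.sqrt τ / 2)
      have h2 : 2 * (u / Real.sqrt τ / 2) = u / Real.sqrt τ := by ring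
      rw [h2] at h
      linarith
    rw [hcos]
    have : u / Real.sqrt τ / 2 = u / (2 * Real.sqrt τ) := by ring
    rw [this]
    nlinarith [hsq]

lemma key (s : Set ℝ) (hs : MeasurableSet s) :
    Tendsto (fun τ : ℝ => ∫ u, Set.indicator (Set.Icc (-(π * Real.sqrt τ)) (π * Real.sqrt τ) ∩ s)
      (fun u => Real.exp (τ * (Real.cos (u / Real.sqrt τ) - 1))) u) atTop
      (𝓝 (∫ u in s, Real.exp (-u^2/2))) := by
  have hπ : (0:ℝ) < π := Real.pi_pos
  have hbound : Integrable (fun u : ℝ => Real.exp (-(2/π^2) * u^2)) :=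
    integrable_exp_neg_mul_sq (by positivity)
  rw [← MeasureTheory.integral_indicator hs]
  refine tendsto_integral_filter_of_dominated_convergence _ ?_ ?_ hbound ?_
  · filter_upwards with τ
    exact (Measurable.indicator (by fun_prop) ((measurableSet_Icc).inter hs)).aestronglyMeasurable
  · filter_upwards [eventually_gt_atTop (0:ℝ)] with τ hτ
    refine Filter.Eventually.of_forall (fun u => ?_)
    have hs0 : (0:ℝ) < Real.sqrt τ := Real.sqrt_pos.mpr hτ
    by_cases hu : u ∈ Set.Icc (-(π * Real.sqrt τ)) (π * Real.sqrt τ) ∩ s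
    · rw [Set.indicator_of_mem hu, Real.norm_eq_abs, abs_of_pos (Real.exp_pos _),
        Real.exp_le_exp]
      have habs : |u / Real.sqrt τ| ≤ π := by
        rw [abs_div, abs_of_pos hs0, div_le_iff₀ hs0]
        rw [abs_le]
        exact ⟨by linarith [hu.1.1], by linarith [hu.1.2]⟩
      have hc := Real.cos_le_one_sub_mul_cos_sq habs
      have h1 : τ * (Real.cos (u / Real.sqrt τ) - 1) ≤ τ * (-(2/π^2) * (u / Real.sqrt τ)^2) := by
        apply mul_le_mul_of_nonneg_left _ hτ.le
        nlinarith [hc]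
      refine h1.trans (le_of_eq ?_)
      have hsq : Real.sqrt τ ^ 2 = τ := Real.sq_sqrt hτ.le
      field_simp
      linear_combination u^2 * hsq
    · rw [Set.indicator_of_notMem hu, norm_zero]
      positivity
  · refine Filter.Eventually.of_forall (fun u => ?_)
    by_cases hu : u ∈ s
    · have hev : ∀ᶠ τ : ℝ in atTop,
          Set.indicator (Set.Icc (-(π * Real.sqrt τ)) (π * Real.sqrt τ) ∩ s)
            (fun u => Real.exp (τ * (Real.cos (u / Real.sqrt τ) - 1))) u
          = Real.exp (τ * (Real.cos (u / Real.sqrt τ) - 1)) := by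
        have hT : Tendsto (fun τ : ℝ => π * Real.sqrt τ) atTop atTop :=
          sqrt_tendsto_atTop.const_mul_atTop hπ
        filter_upwards [hT.eventually_ge_atTop |u|] with τ hτ
        apply Set.indicator_of_mem
        refine ⟨⟨?_, ?_⟩, hu⟩
        · linarith [neg_abs_le u]
        · linarith [le_abs_self u]
      rw [Set.indicator_of_mem hu]
      exact (((Real.continuous_exp.tendsto _).comp (tendsto_tau_cos u))).congr'
        (hev.mono fun τ h => h.symm)
    · have : ∀ τ : ℝ, Set.indicator (Set.Icc (-(π * Real.sqrt τ)) (π * Real.sqrt τ) ∩ s)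
          (fun u => Real.exp (τ * (Real.cos (u / Real.sqrt τ) - 1))) u = 0 := fun τ =>
        Set.indicator_of_notMem (fun h => hu h.2) _
      simp only [this, Set.indicator_of_notMem hu]
      exact tendsto_const_nhds

lemma bessel_eq (τ : ℝ) :
    2 * π * besselI0 τ = ∫ t in Set.Icc (-π) π, Real.exp (τ * Real.cos t) := by
  have hπ : (0:ℝ) < π := Real.pi_pos
  have hcont : Continuous fun t : ℝ => Real.exp (τ * Real.cos t) := by fun_prop
  have h1 : ∫ t in Set.Icc (-π) π, Real.exp (τ * Real.cos t)
      = ∫ t in (-π)..π, Real.exp (τ * Real.cos t) := by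
    rw [MeasureTheory.integral_Icc_eq_integral_Ioc,
      ← intervalIntegral.integral_of_le (by linarith)]
  have h2 : ∫ t in (-π)..(0:ℝ), Real.exp (τ * Real.cos t)
      = ∫ t in (0:ℝ)..π, Real.exp (τ * Real.cos t) := by
    have := intervalIntegral.integral_comp_neg (a := (0:ℝ)) (b := π)
      (fun t => Real.exp (τ * Real.cos t))
    simp only [Real.cos_neg, neg_zero] at this
    rw [← this]
  have h3 : ∫ t in (-π)..π, Real.exp (τ * Real.cos t)
      = (∫ t in (-π)..(0:ℝ), Real.exp (τ * Real.cos t))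
        + ∫ t in (0:ℝ)..π, Real.exp (τ * Real.cos t) :=
    (intervalIntegral.integral_add_adjacent_intervals
      (hcont.intervalIntegrable _ _) (hcont.intervalIntegrable _ _)).symm
  rw [h1, h3, h2, besselI0]
  field_simp
  ring

lemma bessel_pos (τ : ℝ) : 0 < ∫ t in Set.Icc (-π) π, Real.exp (τ * Real.cos t) := by
  have hπ : (0:ℝ) < π := Real.pi_pos
  have hcont : Continuous fun t : ℝ => Real.exp (τ * Real.cos t) := by fun_prop
  have hge : Real.exp (-|τ|) * (volume (Set.Icc (-π) π)).toReal
      ≤ ∫ t in Set.Icc (-π) π, Real.exp (τ * Real.cos t) := by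
    rw [mul_comm]
    apply MeasureTheory.setIntegral_ge_of_const_le measurableSet_Icc
      (by simp [Real.volume_Icc]) (fun t _ => ?_)
      (hcont.integrableOn_Icc)
    apply Real.exp_le_exp.mpr
    have h1 : |τ * Real.cos t| ≤ |τ| := by
      rw [abs_mul]
      exact mul_le_of_le_one_right (abs_nonneg τ) (Real.abs_cos_le_one t)
    linarith [neg_abs_le (τ * Real.cos t), h1]
  have hvol : (volume (Set.Icc (-π) π)).toReal = 2 * π := by
    rw [Real.volume_Icc]
    rw [ENNReal.toReal_ofReal (by linarith)]
    ring
  rw [hvol] at hge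
  have := Real.exp_pos (-|τ|)
  nlinarith

lemma cdf_eq (ν x : ℝ) {τ : ℝ} (hτ : 0 < τ) :
    ((vonMisesLaw ν τ).map (fun θ => Real.sqrt τ * (θ - ν)) (Set.Iic x)).toReal
    = (∫ u, Set.indicator (Set.Icc (-(π * Real.sqrt τ)) (π * Real.sqrt τ) ∩ Set.Iic x)
        (fun u => Real.exp (τ * (Real.cos (u / Real.sqrt τ) - 1))) u)
      / (∫ u, Set.indicator (Set.Icc (-(π * Real.sqrt τ)) (π * Real.sqrt τ) ∩ Set.univ)
        (fun u => Real.exp (τ * (Real.cos (u / Real.sqrt τ) - 1))) u) := by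
  have hπ : (0:ℝ) < π := Real.pi_pos
  have hs0 : (0:ℝ) < Real.sqrt τ := Real.sqrt_pos.mpr hτ
  have hC : (0:ℝ) < 2 * π * besselI0 τ := by rw [bessel_eq]; exact bessel_pos τ
  set C := 2 * π * besselI0 τ with hCdef
  -- step 1 : map apply
  have hmeas : Measurable fun θ : ℝ => Real.sqrt τ * (θ - ν) := by fun_prop
  have hpre : (fun θ : ℝ => Real.sqrt τ * (θ - ν)) ⁻¹' (Set.Iic x)
      = Set.Iic (ν + x / Real.sqrt τ) := by
    ext θ
    simp only [Set.mem_preimage, Set.mem_Iic]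
    rw [mul_comm, ← le_div_iff₀ hs0]
    constructor <;> intro <;> linarith
  rw [Measure.map_apply hmeas measurableSet_Iic, hpre, vonMisesLaw,
    withDensity_apply _ measurableSet_Iic]
  -- step 2 : toReal of lintegral
  set g : ℝ → ℝ := Set.indicator (Set.Icc (ν - π) (ν + π))
      (fun θ => Real.exp (τ * Real.cos (θ - ν)) / C) with hgdef
  have hgmeas : Measurable g := Measurable.indicator (by fun_prop) measurableSet_Icc
  have hgnn : 0 ≤ g := fun θ => Set.indicator_nonneg
    (fun θ _ => div_nonneg (Real.exp_pos _).le hC.le) θ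
  have htoReal : (∫⁻ θ in Set.Iic (ν + x / Real.sqrt τ), ENNReal.ofReal (g θ)).toReal
      = ∫ θ in Set.Iic (ν + x / Real.sqrt τ), g θ := by
    rw [MeasureTheory.integral_eq_lintegral_of_nonneg_ae
      (Filter.Eventually.of_forall (fun θ => hgnn θ))
      hgmeas.aestronglyMeasurable.restrict]
  rw [htoReal]
  -- step 3 : integral over set to indicator
  rw [← MeasureTheory.integral_indicator measurableSet_Iic]
  have hii : Set.indicator (Set.Iic (ν + x / Real.sqrt τ)) g
      = Set.indicator (Set.Iic (ν + x / Real.sqrt τ) ∩ Set.Icc (ν - π) (ν + π))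
        (fun θ => Real.exp (τ * Real.cos (θ - ν)) / C) := by
    rw [hgdef, Set.indicator_indicator]
  rw [hii]
  -- step 5 : translation
  have htrans : ∀ θ : ℝ,
      Set.indicator (Set.Iic (ν + x / Real.sqrt τ) ∩ Set.Icc (ν - π) (ν + π))
        (fun θ => Real.exp (τ * Real.cos (θ - ν)) / C) θ
      = Set.indicator (Set.Iic (x / Real.sqrt τ) ∩ Set.Icc (-π) π)
        (fun t => Real.exp (τ * Real.cos t) / C) (θ - ν) := by
    intro θ
    have hmem : θ ∈ Set.Iic (ν + x / Real.sqrt τ) ∩ Set.Icc (ν - π) (ν + π)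
        ↔ (θ - ν) ∈ Set.Iic (x / Real.sqrt τ) ∩ Set.Icc (-π) π := by
      simp only [Set.mem_inter_iff, Set.mem_Iic, Set.mem_Icc]
      constructor <;> intro h <;> exact ⟨by linarith [h.1], by linarith [h.2.1], by linarith [h.2.2]⟩
    by_cases h : θ ∈ Set.Iic (ν + x / Real.sqrt τ) ∩ Set.Icc (ν - π) (ν + π)
    · rw [Set.indicator_of_mem h, Set.indicator_of_mem (hmem.mp h)]
    · rw [Set.indicator_of_notMem h, Set.indicator_of_notMem (fun hc => h (hmem.mpr hc))]
  rw [MeasureTheory.integral_congr_ae (Filter.Eventually.of_forall htrans),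
    MeasureTheory.integral_sub_right_eq_self
      (fun t => Set.indicator (Set.Iic (x / Real.sqrt τ) ∩ Set.Icc (-π) π)
        (fun t => Real.exp (τ * Real.cos t) / C) t) ν]
  -- step 6 : scaling
  set H : ℝ → ℝ := Set.indicator (Set.Icc (-(π * Real.sqrt τ)) (π * Real.sqrt τ) ∩ Set.Iic x)
      (fun u => Real.exp (τ * Real.cos (u / Real.sqrt τ))) with hHdef
  have hscale : ∀ t : ℝ,
      Set.indicator (Set.Iic (x / Real.sqrt τ) ∩ Set.Icc (-π) π)
        (fun t => Real.exp (τ * Real.cos t) / C) t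
      = H (Real.sqrt τ * t) / C := by
    intro t
    have hmem : t ∈ Set.Iic (x / Real.sqrt τ) ∩ Set.Icc (-π) π
        ↔ Real.sqrt τ * t ∈ Set.Icc (-(π * Real.sqrt τ)) (π * Real.sqrt τ) ∩ Set.Iic x := by
      simp only [Set.mem_inter_iff, Set.mem_Iic, Set.mem_Icc]
      constructor <;> intro h
      · refine ⟨⟨by nlinarith [h.2.1], by nlinarith [h.2.2]⟩, ?_⟩
        calc Real.sqrt τ * t ≤ Real.sqrt τ * (x / Real.sqrt τ) := by nlinarith [h.1]
        _ = x := by field_simp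
      · refine ⟨?_, by nlinarith [h.1.1], by nlinarith [h.1.2]⟩
        rw [le_div_iff₀ hs0]
        nlinarith [h.2]
    have hcos : Real.cos ((Real.sqrt τ * t) / Real.sqrt τ) = Real.cos t := by
      rw [mul_comm, mul_div_assoc, div_self hs0.ne', mul_one]
    by_cases h : t ∈ Set.Iic (x / Real.sqrt τ) ∩ Set.Icc (-π) π
    · rw [Set.indicator_of_mem h, hHdef, Set.indicator_of_mem (hmem.mp h), hcos]
    · rw [Set.indicator_of_notMem h, hHdef,
        Set.indicator_of_notMem (fun hc => h (hmem.mpr hc)), zero_div]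
  rw [MeasureTheory.integral_congr_ae (Filter.Eventually.of_forall hscale)]
  rw [MeasureTheory.integral_div]
  rw [Measure.integral_comp_mul_left (fun u => H u) (Real.sqrt τ)]
  -- pull out exp (-τ) from the indicator integrals
  have hpull : ∀ s : Set ℝ,
      (∫ u, Set.indicator s (fun u => Real.exp (τ * (Real.cos (u / Real.sqrt τ) - 1))) u)
      = Real.exp (-τ) * ∫ u, Set.indicator s (fun u => Real.exp (τ * Real.cos (u / Real.sqrt τ))) u := by
    intro s
    rw [← MeasureTheory.integral_const_mul]
    congr 1
    ext u
    rw [← Set.indicator_const_mul]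
    congr 1
    ext v
    rw [← Real.exp_add]
    congr 1
    ring
  rw [hpull, hpull]
  -- denominator : relate C to the scaled integral
  set H' : ℝ → ℝ := Set.indicator (Set.Icc (-(π * Real.sqrt τ)) (π * Real.sqrt τ) ∩ Set.univ)
      (fun u => Real.exp (τ * Real.cos (u / Real.sqrt τ))) with hH'def
  have hCeq : C = |(Real.sqrt τ)⁻¹| • ∫ u, H' u := by
    have h1 : ∀ t : ℝ, Set.indicator (Set.Icc (-π) π) (fun t => Real.exp (τ * Real.cos t)) t
        = H' (Real.sqrt τ * t) := by
      intro t
      have hmem : t ∈ Set.Icc (-π) π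
          ↔ Real.sqrt τ * t ∈ Set.Icc (-(π * Real.sqrt τ)) (π * Real.sqrt τ) ∩ Set.univ := by
        simp only [Set.mem_Icc, Set.mem_inter_iff, Set.mem_univ, and_true]
        constructor <;> intro h
        · exact ⟨by nlinarith [h.1], by nlinarith [h.2]⟩
        · constructor <;> nlinarith [h.1, h.2, mul_pos hπ hs0]
      have hcos : Real.cos ((Real.sqrt τ * t) / Real.sqrt τ) = Real.cos t := by
        rw [mul_comm, mul_div_assoc, div_self hs0.ne', mul_one]
      by_cases h : t ∈ Set.Icc (-π) π
      · rw [Set.indicator_of_mem h, hH'def, Set.indicator_of_mem (hmem.mp h), hcos]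
      · rw [Set.indicator_of_notMem h, hH'def,
          Set.indicator_of_notMem (fun hc => h (hmem.mpr hc))]
    have h2 : C = ∫ t, Set.indicator (Set.Icc (-π) π) (fun t => Real.exp (τ * Real.cos t)) t := by
      rw [hCdef, bessel_eq, ← MeasureTheory.integral_indicator measurableSet_Icc]
    rw [h2, MeasureTheory.integral_congr_ae (Filter.Eventually.of_forall h1),
      Measure.integral_comp_mul_left (fun u => H' u) (Real.sqrt τ)]
  rw [hCeq]
  have habs : |(Real.sqrt τ)⁻¹| = (Real.sqrt τ)⁻¹ := abs_of_pos (by positivity)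
  rw [smul_eq_mul, smul_eq_mul, habs,
    mul_div_mul_left _ _ (inv_ne_zero hs0.ne'),
    mul_div_mul_left _ _ (Real.exp_ne_zero (-τ))]

theorem vonMises_clt (ν : ℝ) :
    ∀ x : ℝ,
      Tendsto
        (fun τ : ℝ =>
          ((vonMisesLaw ν τ).map (fun θ => Real.sqrt τ * (θ - ν)) (Set.Iic x)).toReal)
        atTop (nhds ((gaussianReal 0 1 (Set.Iic x)).toReal)) := by
  intro x
  have hπ : (0:ℝ) < π := Real.pi_pos
  have hnum := key (Set.Iic x) measurableSet_Iic
  have hden := key Set.univ MeasurableSet.univ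
  have hexp : ∀ u : ℝ, Real.exp (-u^2/2) = Real.exp (-(1/2) * u^2) := fun u => by
    congr 1; ring
  have hdenval : (∫ u in Set.univ, Real.exp (-u^2/2)) = Real.sqrt (2*π) := by
    rw [MeasureTheory.setIntegral_univ]
    rw [MeasureTheory.integral_congr_ae (Filter.Eventually.of_forall hexp)]
    rw [integral_gaussian]
    congr 1
    ring
  rw [hdenval] at hden
  have hsqrt_pos : (0:ℝ) < Real.sqrt (2*π) := Real.sqrt_pos.mpr (by positivity)
  have hratio := hnum.div hden hsqrt_pos.ne'
  have hgauss : (gaussianReal 0 1 (Set.Iic x)).toReal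
      = (∫ u in Set.Iic x, Real.exp (-u^2/2)) / Real.sqrt (2*π) := by
    rw [gaussianReal_apply_eq_integral 0 one_ne_zero (Set.Iic x)]
    rw [ENNReal.toReal_ofReal (MeasureTheory.setIntegral_nonneg measurableSet_Iic
      (fun u _ => gaussianPDFReal_nonneg 0 1 u))]
    have : ∀ u : ℝ, gaussianPDFReal 0 1 u = (Real.sqrt (2*π))⁻¹ * Real.exp (-u^2/2) := by
      intro u
      rw [gaussianPDFReal]
      push_cast
      norm_num
    rw [MeasureTheory.integral_congr_ae (Filter.Eventually.of_forall fun u => this u)]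
    rw [MeasureTheory.integral_const_mul, inv_mul_eq_div]
  rw [hgauss]
  refine hratio.congr' ?_
  filter_upwards [eventually_gt_atTop (0:ℝ)] with τ hτ
  exact (cdf_eq ν x hτ).symm
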